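/- arXiv:1307.2987 — 2 statements merged into one kernel-verified Lean document; each statement's English description precedes it below -/
import Mathlib

section
/- In a Minkowski plane with parallelogram unit ball, given three points t₁, t₂, t₃ and a fourth point s, if ‖tᵢ − s‖ + ‖tⱼ − s‖ = ‖tᵢ − tⱼ‖ for all 1 ≤ i < j ≤ 3, and s′ is any other point satisfying the same three equations, then s′ = s. That is, the tessellation point, if it exists, is unique. -/
lemma two_max (u v : ℝ) : 2 * max |u| |v| = |u + v| + |u - v| := by
  rcases le_total 0 u with hu|hu <;> rcases le_total 0 v with hv|hv <;>
    rcases le_total u v with huv|huv <;>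
    rcases abs_cases (u+v) with ⟨e1,_⟩|⟨e1,_⟩ <;>
    rcases abs_cases (u-v) with ⟨e2,_⟩|⟨e2,_⟩ <;>
    simp [abs_of_nonneg, abs_of_nonpos, hu, hv, max_def] <;> split <;> linarith

lemma betw {a b x : ℝ} (h : |a - x| + |b - x| = |a - b|) :
    min a b ≤ x ∧ x ≤ max a b := by
  rcases abs_cases (a-x) with ⟨e1,f1⟩|⟨e1,f1⟩ <;>
  rcases abs_cases (b-x) with ⟨e2,f2⟩|⟨e2,f2⟩ <;>
  rcases abs_cases (a-b) with ⟨e3,f3⟩|⟨e3,f3⟩ <;>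
  constructor <;> simp [min_def, max_def] <;> split <;> linarith

lemma uniq1d {a b c x y : ℝ}
    (hx1 : |a - x| + |b - x| = |a - b|) (hx2 : |a - x| + |c - x| = |a - c|)
    (hx3 : |b - x| + |c - x| = |b - c|)
    (hy1 : |a - y| + |b - y| = |a - b|) (hy2 : |a - y| + |c - y| = |a - c|)
    (hy3 : |b - y| + |c - y| = |b - c|) : x = y := by
  obtain ⟨p1, q1⟩ := betw hx1
  obtain ⟨p2, q2⟩ := betw hx2
  obtain ⟨p3, q3⟩ := betw hx3
  obtain ⟨r1, s1⟩ := betw hy1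
  obtain ⟨r2, s2⟩ := betw hy2
  obtain ⟨r3, s3⟩ := betw hy3
  rcases le_total a b with h1|h1 <;> rcases le_total a c with h2|h2 <;>
    rcases le_total b c with h3|h3 <;>
    simp [min_def, max_def, h1, h2, h3, *] at * <;> linarith

/-- In a Minkowski plane whose unit ball is a parallelogram (i.e. the norm is
`‖x‖ = max |f x| |g x|` for linear functionals `f, g`), a tessellation point of
three points `t₁, t₂, t₃` is unique: if both `s` and `s'` satisfy
`‖tᵢ − x‖ + ‖tⱼ − x‖ = ‖tᵢ − tⱼ‖` for all `i < j`, then `s' = s`. -/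
theorem stmt_7 {E : Type*} [NormedAddCommGroup E] [NormedSpace ℝ E]
    (hdim : Module.finrank ℝ E = 2)
    (f g : E →ₗ[ℝ] ℝ) (hball : ∀ x : E, ‖x‖ = max |f x| |g x|)
    (t₁ t₂ t₃ s s' : E)
    (h12 : ‖t₁ - s‖ + ‖t₂ - s‖ = ‖t₁ - t₂‖)
    (h13 : ‖t₁ - s‖ + ‖t₃ - s‖ = ‖t₁ - t₃‖)
    (h23 : ‖t₂ - s‖ + ‖t₃ - s‖ = ‖t₂ - t₃‖)
    (h12' : ‖t₁ - s'‖ + ‖t₂ - s'‖ = ‖t₁ - t₂‖)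
    (h13' : ‖t₁ - s'‖ + ‖t₃ - s'‖ = ‖t₁ - t₃‖)
    (h23' : ‖t₂ - s'‖ + ‖t₃ - s'‖ = ‖t₂ - t₃‖) :
    s' = s := by
  set P : E → ℝ := fun x => f x + g x with hP
  set Q : E → ℝ := fun x => f x - g x with hQ
  have hnorm : ∀ x : E, 2 * ‖x‖ = |P x| + |Q x| := by
    intro x
    rw [hball x, two_max]
  have hPsub : ∀ a b : E, P (a - b) = P a - P b := by
    intro a b; simp [hP, map_sub]; ring
  have hQsub : ∀ a b : E, Q (a - b) = Q a - Q b := by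
    intro a b; simp [hQ, map_sub]; ring
  -- split each norm equality into coordinatewise equalities
  have key : ∀ (a b x : E), ‖a - x‖ + ‖b - x‖ = ‖a - b‖ →
      (|P a - P x| + |P b - P x| = |P a - P b|) ∧
      (|Q a - Q x| + |Q b - Q x| = |Q a - Q b|) := by
    intro a b x h
    have e : 2 * ‖a - x‖ + 2 * ‖b - x‖ = 2 * ‖a - b‖ := by linarith
    rw [hnorm, hnorm, hnorm, hPsub, hPsub, hPsub, hQsub, hQsub, hQsub] at e
    have tP : |P a - P b| ≤ |P a - P x| + |P b - P x| := by
      have := abs_sub_le (P a) (P x) (P b)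
      rwa [abs_sub_comm (P x) (P b)] at this
    have tQ : |Q a - Q b| ≤ |Q a - Q x| + |Q b - Q x| := by
      have := abs_sub_le (Q a) (Q x) (Q b)
      rwa [abs_sub_comm (Q x) (Q b)] at this
    constructor <;> linarith
  obtain ⟨P12, Q12⟩ := key _ _ _ h12
  obtain ⟨P13, Q13⟩ := key _ _ _ h13
  obtain ⟨P23, Q23⟩ := key _ _ _ h23
  obtain ⟨P12', Q12'⟩ := key _ _ _ h12'
  obtain ⟨P13', Q13'⟩ := key _ _ _ h13'
  obtain ⟨P23', Q23'⟩ := key _ _ _ h23'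
  have hPs : P s = P s' := uniq1d P12 P13 P23 P12' P13' P23'
  have hQs : Q s = Q s' := uniq1d Q12 Q13 Q23 Q12' Q13' Q23'
  have hfs : f s' = f s := by simp [hP, hQ] at hPs hQs; linarith
  have hgs : g s' = g s := by simp [hP, hQ] at hPs hQs; linarith
  have : ‖s' - s‖ = 0 := by
    rw [hball]
    simp [map_sub, hfs, hgs]
  rw [← sub_eq_zero]
  exact norm_eq_zero.mp this
end

section
/- In the Euclidean plane, let N = {(1, √3/2), (1, −√3/2), (−1, √3/2), (−1, −√3/2)}. The full Steiner tree with Steiner points (1/2, 0) and (−1/2, 0), where each Steiner point is joined to the two terminals on its side and the Steiner points are joined to each other, has total length 5; and the full Steiner tree with Steiner points (0, √3/2 − 1/√3) and (0, −(√3/2 − 1/√3)) (each joined to the two terminals at its end and to the other Steiner point) has total length 3√3. -/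
noncomputable def pt (x y : ℝ) : EuclideanSpace ℝ (Fin 2) := WithLp.toLp 2 ![x, y]

lemma dist_pt (a b c d : ℝ) :
    dist (pt a b) (pt c d) = Real.sqrt ((a - c) ^ 2 + (b - d) ^ 2) := by
  rw [EuclideanSpace.dist_eq]
  simp [pt, Fin.sum_univ_two, Real.dist_eq, sq_abs]

lemma s3 : Real.sqrt 3 ^ 2 = 3 := Real.sq_sqrt (by norm_num)

lemma s3pos : (0:ℝ) < Real.sqrt 3 := Real.sqrt_pos.2 (by norm_num)

/-- For the four terminals `(±1, ±√3/2)`: the full Steiner tree with Steiner points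
`(±1/2, 0)` has total length `5`, and the full Steiner tree with Steiner points
`(0, ±(√3/2 − 1/√3))` has total length `3√3`. -/
theorem stmt_16 :
    (dist (pt 1 (Real.sqrt 3 / 2)) (pt (1/2) 0)
      + dist (pt 1 (-(Real.sqrt 3 / 2))) (pt (1/2) 0)
      + dist (pt (-1) (Real.sqrt 3 / 2)) (pt (-(1/2)) 0)
      + dist (pt (-1) (-(Real.sqrt 3 / 2))) (pt (-(1/2)) 0)
      + dist (pt (1/2) 0) (pt (-(1/2)) 0) = 5) ∧
    (dist (pt 1 (Real.sqrt 3 / 2)) (pt 0 (Real.sqrt 3 / 2 - 1 / Real.sqrt 3))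
      + dist (pt (-1) (Real.sqrt 3 / 2)) (pt 0 (Real.sqrt 3 / 2 - 1 / Real.sqrt 3))
      + dist (pt 1 (-(Real.sqrt 3 / 2))) (pt 0 (-(Real.sqrt 3 / 2 - 1 / Real.sqrt 3)))
      + dist (pt (-1) (-(Real.sqrt 3 / 2))) (pt 0 (-(Real.sqrt 3 / 2 - 1 / Real.sqrt 3)))
      + dist (pt 0 (Real.sqrt 3 / 2 - 1 / Real.sqrt 3))
          (pt 0 (-(Real.sqrt 3 / 2 - 1 / Real.sqrt 3)))
      = 3 * Real.sqrt 3) := by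
  have h3 := s3
  have hpos := s3pos
  have hne : Real.sqrt 3 ≠ 0 := ne_of_gt hpos
  constructor
  · rw [dist_pt, dist_pt, dist_pt, dist_pt, dist_pt]
    have e1 : ((1:ℝ) - 1/2) ^ 2 + (Real.sqrt 3 / 2 - 0) ^ 2 = 1 := by
      nlinarith [h3]
    have e2 : ((1:ℝ) - 1/2) ^ 2 + (-(Real.sqrt 3 / 2) - 0) ^ 2 = 1 := by
      nlinarith [h3]
    have e3 : ((-1:ℝ) - -(1/2)) ^ 2 + (Real.sqrt 3 / 2 - 0) ^ 2 = 1 := by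
      nlinarith [h3]
    have e4 : ((-1:ℝ) - -(1/2)) ^ 2 + (-(Real.sqrt 3 / 2) - 0) ^ 2 = 1 := by
      nlinarith [h3]
    have e5 : ((1:ℝ)/2 - -(1/2)) ^ 2 + ((0:ℝ) - 0) ^ 2 = 1 := by norm_num
    rw [e1, e2, e3, e4, e5, Real.sqrt_one]
    norm_num
  · rw [dist_pt, dist_pt, dist_pt, dist_pt, dist_pt]
    have key : (1:ℝ) + (1 / Real.sqrt 3) ^ 2 = (2 / Real.sqrt 3) ^ 2 := by
      field_simp
      nlinarith [h3]
    have e1 : ((1:ℝ) - 0) ^ 2 + (Real.sqrt 3 / 2 - (Real.sqrt 3 / 2 - 1 / Real.sqrt 3)) ^ 2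
        = (2 / Real.sqrt 3) ^ 2 := by
      rw [← key]; ring_nf
    have e2 : ((-1:ℝ) - 0) ^ 2 + (Real.sqrt 3 / 2 - (Real.sqrt 3 / 2 - 1 / Real.sqrt 3)) ^ 2
        = (2 / Real.sqrt 3) ^ 2 := by
      rw [← key]; ring_nf
    have e3 : ((1:ℝ) - 0) ^ 2 + (-(Real.sqrt 3 / 2) - -(Real.sqrt 3 / 2 - 1 / Real.sqrt 3)) ^ 2
        = (2 / Real.sqrt 3) ^ 2 := by
      rw [← key]; ring_nf
    have e4 : ((-1:ℝ) - 0) ^ 2 + (-(Real.sqrt 3 / 2) - -(Real.sqrt 3 / 2 - 1 / Real.sqrt 3)) ^ 2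
        = (2 / Real.sqrt 3) ^ 2 := by
      rw [← key]; ring_nf
    have hmid : Real.sqrt 3 / 2 - 1 / Real.sqrt 3 ≥ 0 := by
      rw [ge_iff_le, sub_nonneg, div_le_div_iff₀ hpos (by norm_num : (0:ℝ) < 2)]
      nlinarith [h3]
    have e5 : ((0:ℝ) - 0) ^ 2 + (Real.sqrt 3 / 2 - 1 / Real.sqrt 3
        - -(Real.sqrt 3 / 2 - 1 / Real.sqrt 3)) ^ 2
        = (Real.sqrt 3 - 2 / Real.sqrt 3) ^ 2 := by ring
    rw [e1, e2, e3, e4, e5]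
    have h2 : Real.sqrt ((2 / Real.sqrt 3) ^ 2) = 2 / Real.sqrt 3 :=
      Real.sqrt_sq (by positivity)
    have h5 : Real.sqrt ((Real.sqrt 3 - 2 / Real.sqrt 3) ^ 2)
        = Real.sqrt 3 - 2 / Real.sqrt 3 := by
      apply Real.sqrt_sq
      rw [sub_nonneg, div_le_iff₀ hpos]
      nlinarith [h3]
    rw [h2, h5]
    field_simp
    nlinarith [h3]
end
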